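/- Fix λ ∈ ℤ. Each of the three alternating bilinear forms on 𝔴_λ determined on basis elements by γ_LL(L_n, L_m) = (1/12) n(n²−1) δ_{n+m,0}, γ_LD(L_n, D_m) = (1/2) n(n+1) δ_{n+m,0}, and γ_DD(D_n, D_m) = n δ_{n+m,0} (each extended by zero on all other pairs of basis elements and by antisymmetry) is a 2-cocycle on 𝔴_λ with values in the trivial module ℝ: it satisfies γ([X,Y],Z) + γ([Y,Z],X) + γ([Z,X],Y) = 0 for all X, Y, Z ∈ 𝔴_λ. -/

import Mathlib

/-- Basis labels for the centreless Weyl λ-BMS algebra. -/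
inductive WGen : Type
  | L : ℤ → WGen
  | D : ℤ → WGen
  | P : ℤ → WGen

/-- The bracket on basis elements of the centreless Weyl λ-BMS algebra. -/
noncomputable def wbGen (lam : ℤ) : WGen → WGen → (WGen →₀ ℝ)
  | WGen.L n, WGen.L m => ((n : ℝ) - m) • Finsupp.single (WGen.L (n + m)) 1
  | WGen.L n, WGen.D m => (-(m : ℝ)) • Finsupp.single (WGen.D (n + m)) 1
  | WGen.D m, WGen.L n => ((m : ℝ)) • Finsupp.single (WGen.D (n + m)) 1
  | WGen.L n, WGen.P m => (-((m : ℝ) + (lam : ℝ) * n)) • Finsupp.single (WGen.P (n + m)) 1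
  | WGen.P m, WGen.L n => (((m : ℝ) + (lam : ℝ) * n)) • Finsupp.single (WGen.P (n + m)) 1
  | WGen.D n, WGen.P m => Finsupp.single (WGen.P (n + m)) 1
  | WGen.P m, WGen.D n => -(Finsupp.single (WGen.P (n + m)) 1)
  | _, _ => 0

/-- The bilinear extension of `wbGen` to the free real vector space on `WGen`. -/
noncomputable def wbr (lam : ℤ) (x y : WGen →₀ ℝ) : WGen →₀ ℝ :=
  x.sum fun gx cx => y.sum fun gy cy => (cx * cy) • wbGen lam gx gy

/-- `γ_LL(L_n, L_m) = (1/12) n(n²-1) δ_{n+m,0}`, zero on other basis pairs. -/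
noncomputable def gLL : WGen → WGen → ℝ
  | WGen.L n, WGen.L m => if n + m = 0 then (1 / 12 : ℝ) * n * ((n : ℝ) ^ 2 - 1) else 0
  | _, _ => 0

/-- `γ_LD(L_n, D_m) = (1/2) n(n+1) δ_{n+m,0}`, extended antisymmetrically,
zero on other basis pairs. -/
noncomputable def gLD : WGen → WGen → ℝ
  | WGen.L n, WGen.D m => if n + m = 0 then (1 / 2 : ℝ) * n * ((n : ℝ) + 1) else 0
  | WGen.D m, WGen.L n => if n + m = 0 then -((1 / 2 : ℝ) * n * ((n : ℝ) + 1)) else 0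
  | _, _ => 0

/-- `γ_DD(D_n, D_m) = n δ_{n+m,0}`, zero on other basis pairs. -/
noncomputable def gDD : WGen → WGen → ℝ
  | WGen.D n, WGen.D m => if n + m = 0 then (n : ℝ) else 0
  | _, _ => 0

/-- The bilinear extension of a form on basis elements to `WGen →₀ ℝ`. -/
noncomputable def cExt (γ : WGen → WGen → ℝ) (x y : WGen →₀ ℝ) : ℝ :=
  x.sum fun gx cx => y.sum fun gy cy => cx * cy * γ gx gy

-- helper lemmas
lemma cExt_zero_left (γ : WGen → WGen → ℝ) (z : WGen →₀ ℝ) : cExt γ 0 z = 0 := by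
  simp [cExt]

lemma cExt_zero_right (γ : WGen → WGen → ℝ) (x : WGen →₀ ℝ) : cExt γ x 0 = 0 := by
  simp [cExt]

lemma cExt_add_left (γ : WGen → WGen → ℝ) (x x' z : WGen →₀ ℝ) :
    cExt γ (x + x') z = cExt γ x z + cExt γ x' z := by
  unfold cExt
  rw [Finsupp.sum_add_index']
  · intro g; simp
  · intro g k k'; rw [← Finsupp.sum_add]; congr 1; ext gy cy; ring

lemma cExt_add_right (γ : WGen → WGen → ℝ) (x z z' : WGen →₀ ℝ) :
    cExt γ x (z + z') = cExt γ x z + cExt γ x z' := by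
  unfold cExt
  rw [← Finsupp.sum_add]
  congr 1; ext gx cx
  rw [Finsupp.sum_add_index']
  · intro g; simp
  · intro g k k'; ring

lemma cExt_smul_left (γ : WGen → WGen → ℝ) (r : ℝ) (x z : WGen →₀ ℝ) :
    cExt γ (r • x) z = r * cExt γ x z := by
  unfold cExt
  rw [Finsupp.sum_smul_index', Finsupp.mul_sum]
  · congr 1; ext gx cx; rw [Finsupp.mul_sum]; congr 1; ext gy cy
    simp only [smul_eq_mul]; ring
  · intro g; simp

lemma cExt_neg_left (γ : WGen → WGen → ℝ) (x z : WGen →₀ ℝ) :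
    cExt γ (-x) z = -cExt γ x z := by
  have := cExt_smul_left γ (-1) x z
  simpa using this

lemma cExt_single_single (γ : WGen → WGen → ℝ) (a b : WGen) (k l : ℝ) :
    cExt γ (Finsupp.single a k) (Finsupp.single b l) = k * l * γ a b := by
  unfold cExt
  rw [Finsupp.sum_single_index, Finsupp.sum_single_index] <;> simp

lemma cExt_smul_right (γ : WGen → WGen → ℝ) (r : ℝ) (x z : WGen →₀ ℝ) :
    cExt γ x (r • z) = r * cExt γ x z := by
  unfold cExt
  rw [Finsupp.mul_sum]
  congr 1; ext gx cx
  rw [Finsupp.sum_smul_index', Finsupp.mul_sum]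
  · congr 1; ext gy cy; simp only [smul_eq_mul]; ring
  · intro g; simp

lemma wbr_zero_left (lam : ℤ) (y : WGen →₀ ℝ) : wbr lam 0 y = 0 := by simp [wbr]

lemma wbr_zero_right (lam : ℤ) (x : WGen →₀ ℝ) : wbr lam x 0 = 0 := by simp [wbr]

lemma wbr_add_left (lam : ℤ) (x x' y : WGen →₀ ℝ) :
    wbr lam (x + x') y = wbr lam x y + wbr lam x' y := by
  unfold wbr
  rw [Finsupp.sum_add_index']
  · intro g; simp
  · intro g k k'; rw [← Finsupp.sum_add]; congr 1; ext gy cy; rw [add_mul, add_smul]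

lemma wbr_add_right (lam : ℤ) (x y y' : WGen →₀ ℝ) :
    wbr lam x (y + y') = wbr lam x y + wbr lam x y' := by
  unfold wbr
  rw [← Finsupp.sum_add]
  congr 1; ext gx cx
  rw [Finsupp.sum_add_index']
  · intro g; simp
  · intro g k k'; rw [mul_add, add_smul]

lemma wbr_single_single (lam : ℤ) (a b : WGen) (ca cb : ℝ) :
    wbr lam (Finsupp.single a ca) (Finsupp.single b cb) = (ca * cb) • wbGen lam a b := by
  unfold wbr
  rw [Finsupp.sum_single_index, Finsupp.sum_single_index] <;> simp

-- generator-level cocycle identities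
lemma core_gLL (lam : ℤ) (a b c : WGen) :
    cExt gLL (wbGen lam a b) (Finsupp.single c 1) +
    cExt gLL (wbGen lam b c) (Finsupp.single a 1) +
    cExt gLL (wbGen lam c a) (Finsupp.single b 1) = 0 := by
  cases a <;> cases b <;> cases c <;>
    simp only [wbGen, cExt_smul_left, cExt_neg_left, cExt_single_single, cExt_zero_left,
      gLL, gLD, gDD, mul_ite, mul_zero, mul_one, one_mul, neg_zero, add_zero, zero_add] <;>
    try ring
  all_goals (rename_i n m k)
  all_goals rcases eq_or_ne (n + m + k) 0 with h | h
  all_goals split_ifs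
  any_goals (exfalso; omega)
  any_goals ring
  all_goals obtain rfl : k = -n - m := by omega
  all_goals push_cast
  all_goals ring

lemma core_gLD (lam : ℤ) (a b c : WGen) :
    cExt gLD (wbGen lam a b) (Finsupp.single c 1) +
    cExt gLD (wbGen lam b c) (Finsupp.single a 1) +
    cExt gLD (wbGen lam c a) (Finsupp.single b 1) = 0 := by
  cases a <;> cases b <;> cases c <;>
    simp only [wbGen, cExt_smul_left, cExt_neg_left, cExt_single_single, cExt_zero_left,
      gLL, gLD, gDD, mul_ite, mul_zero, mul_one, one_mul, neg_zero, add_zero, zero_add] <;>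
    try ring
  all_goals (rename_i n m k)
  all_goals rcases eq_or_ne (n + m + k) 0 with h | h
  all_goals split_ifs
  any_goals (exfalso; omega)
  any_goals ring
  all_goals obtain rfl : k = -n - m := by omega
  all_goals push_cast
  all_goals ring

lemma core_gDD (lam : ℤ) (a b c : WGen) :
    cExt gDD (wbGen lam a b) (Finsupp.single c 1) +
    cExt gDD (wbGen lam b c) (Finsupp.single a 1) +
    cExt gDD (wbGen lam c a) (Finsupp.single b 1) = 0 := by
  cases a <;> cases b <;> cases c <;>
    simp only [wbGen, cExt_smul_left, cExt_neg_left, cExt_single_single, cExt_zero_left,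
      gLL, gLD, gDD, mul_ite, mul_zero, mul_one, one_mul, neg_zero, add_zero, zero_add] <;>
    try ring
  all_goals (rename_i n m k)
  all_goals rcases eq_or_ne (n + m + k) 0 with h | h
  all_goals split_ifs
  any_goals (exfalso; omega)
  any_goals ring
  all_goals obtain rfl : k = -n - m := by omega
  all_goals push_cast
  all_goals ring

lemma cocycle_ext (γ : WGen → WGen → ℝ) (lam : ℤ)
    (h : ∀ a b c : WGen,
      cExt γ (wbGen lam a b) (Finsupp.single c 1) +
      cExt γ (wbGen lam b c) (Finsupp.single a 1) +
      cExt γ (wbGen lam c a) (Finsupp.single b 1) = 0) :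
    ∀ x y z : WGen →₀ ℝ,
      cExt γ (wbr lam x y) z + cExt γ (wbr lam y z) x + cExt γ (wbr lam z x) y = 0 := by
  intro x y z
  induction x using Finsupp.induction_linear generalizing y z with
  | zero => simp [wbr_zero_left, wbr_zero_right, cExt_zero_left, cExt_zero_right]
  | add f g hf hg =>
    have := hf y z
    have := hg y z
    simp only [wbr_add_left, wbr_add_right, cExt_add_left, cExt_add_right] at *
    linarith
  | single a ca =>
    induction y using Finsupp.induction_linear generalizing z with
    | zero => simp [wbr_zero_left, wbr_zero_right, cExt_zero_left, cExt_zero_right]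
    | add f g hf hg =>
      have := hf z
      have := hg z
      simp only [wbr_add_left, wbr_add_right, cExt_add_left, cExt_add_right] at *
      linarith
    | single b cb =>
      induction z using Finsupp.induction_linear with
      | zero => simp [wbr_zero_left, wbr_zero_right, cExt_zero_left, cExt_zero_right]
      | add f g hf hg =>
        simp only [wbr_add_left, wbr_add_right, cExt_add_left, cExt_add_right] at *
        linarith
      | single c cc =>
        have hs : ∀ g : WGen, ∀ r : ℝ, Finsupp.single g r = r • Finsupp.single g 1 := by
          intro g r; simp [Finsupp.smul_single]
        rw [wbr_single_single, wbr_single_single, wbr_single_single,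
          cExt_smul_left, cExt_smul_left, cExt_smul_left,
          hs c cc, hs a ca, hs b cb, cExt_smul_right, cExt_smul_right, cExt_smul_right]
        linear_combination (ca * cb * cc) * h a b c

/-- Fix `λ ∈ ℤ`.  Each of the bilinear forms `γ_LL`, `γ_LD`, `γ_DD` is a
2-cocycle on the centreless Weyl λ-BMS algebra `𝔴_λ` with values in the trivial
module `ℝ`: it satisfies `γ([X,Y],Z) + γ([Y,Z],X) + γ([Z,X],Y) = 0`. -/
theorem weyl_lambda_bms_two_cocycles (lam : ℤ) :
    (∀ x y z : WGen →₀ ℝ,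
      cExt gLL (wbr lam x y) z + cExt gLL (wbr lam y z) x + cExt gLL (wbr lam z x) y = 0) ∧
    (∀ x y z : WGen →₀ ℝ,
      cExt gLD (wbr lam x y) z + cExt gLD (wbr lam y z) x + cExt gLD (wbr lam z x) y = 0) ∧
    (∀ x y z : WGen →₀ ℝ,
      cExt gDD (wbr lam x y) z + cExt gDD (wbr lam y z) x + cExt gDD (wbr lam z x) y = 0) :=
  ⟨cocycle_ext gLL lam (core_gLL lam), cocycle_ext gLD lam (core_gLD lam),
   cocycle_ext gDD lam (core_gDD lam)⟩
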